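/- arXiv:1707.09429 — 2 statements merged into one kernel-verified Lean document; each statement's English description precedes it below -/
import Mathlib

section
/- Let f be an sos-concave real polynomial in n variables and let k ≥ ⌈deg(f)/2⌉. Suppose y ∈ ℝ^{ℕ^n_{2k}} satisfies y_0 = 1, the moment matrix L_1^{(k)}[y] is positive semidefinite, and the localizing matrix L_f^{(k)}[y] is positive semidefinite. Let u := (y_{e_1},…,y_{e_n}) ∈ ℝ^n, where e_i is the i-th unit multi-index. Then f(u) ≥ R_y(f) ≥ 0. -/
open MvPolynomial Finsupp

noncomputable section

/-- The total degree `|α|` of a multi-index `α ∈ ℕ^n`. -/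
def mdeg {n : ℕ} (α : Fin n →₀ ℕ) : ℕ := ∑ i, α i

/-- `⌈m/2⌉` for a natural number `m`. -/
def halfCeil (m : ℕ) : ℕ := (m + 1) / 2

/-- The Riesz functional `R_y(f) = ∑_γ f_γ y_γ`. -/
def Riesz {n : ℕ} (y : (Fin n →₀ ℕ) → ℝ) (f : MvPolynomial (Fin n) ℝ) : ℝ :=
  ∑ γ ∈ f.support, f.coeff γ * y γ

/-- The `k`-th localizing matrix `L_f^{(k)}[y]`, indexed by multi-indices; its
`(α,β)` entry is `∑_γ f_γ y_{α+β+γ}` when `|α|,|β| ≤ s := k - ⌈deg f / 2⌉` (and `0` otherwise). -/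
def locMat {n : ℕ} (k : ℕ) (f : MvPolynomial (Fin n) ℝ) (y : (Fin n →₀ ℕ) → ℝ) :
    Matrix (Fin n →₀ ℕ) (Fin n →₀ ℕ) ℝ := fun α β =>
  if mdeg α ≤ k - halfCeil f.totalDegree ∧ mdeg β ≤ k - halfCeil f.totalDegree then
    ∑ γ ∈ f.support, f.coeff γ * y (α + β + γ)
  else 0

/-- Positive semidefiniteness of a (block-finitely supported) matrix indexed by multi-indices:
symmetry together with nonnegativity of the quadratic form on all finitely supported vectors. -/
def IsPSD {n : ℕ} (M : Matrix (Fin n →₀ ℕ) (Fin n →₀ ℕ) ℝ) : Prop :=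
  (∀ α β, M α β = M β α) ∧
  ∀ v : (Fin n →₀ ℕ) →₀ ℝ, 0 ≤ ∑ α ∈ v.support, ∑ β ∈ v.support, v α * M α β * v β

/-- The evaluation `u^α` of a monomial with multi-index `α` at a point `u`. -/
def monoEval {n : ℕ} (u : Fin n → ℝ) (α : Fin n →₀ ℕ) : ℝ := ∏ i, u i ^ α i

/-- The finite set of multi-indices `α ∈ ℕ^n` with `|α| ≤ D`. -/
def degLE (n D : ℕ) : Finset (Fin n →₀ ℕ) :=
  (Finset.Iic (Finsupp.equivFunOnFinite.symm fun _ : Fin n => D)).filter fun α => mdeg α ≤ D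

end

/-- A polynomial `f` is sos-convex if there is a matrix polynomial `P(x) ∈ ℝ[x]^{ℓ×n}` with
`∇²f(x) = P(x)ᵀP(x)` identically, i.e. `∂²f/∂xᵢ∂xⱼ = ∑_l P_{l i} P_{l j}`. -/
def SosConvex {n : ℕ} (f : MvPolynomial (Fin n) ℝ) : Prop :=
  ∃ (L : ℕ) (P : Fin L → Fin n → MvPolynomial (Fin n) ℝ),
    ∀ i j : Fin n,
      MvPolynomial.pderiv i (MvPolynomial.pderiv j f) = ∑ l, P l i * P l j

/-- A polynomial `f` is sos-concave if `-f` is sos-convex. -/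
def SosConcave {n : ℕ} (f : MvPolynomial (Fin n) ℝ) : Prop := SosConvex (-f)






namespace Aux


variable {n : ℕ}

lemma mdeg_eq (α : Fin n →₀ ℕ) : mdeg α = α.sum fun _ e => e := by
  rw [Finsupp.sum_fintype]; · rfl
  · intro; rfl

lemma mdeg_add (α β : Fin n →₀ ℕ) : mdeg (α + β) = mdeg α + mdeg β := by
  simp [mdeg, Finsupp.add_apply, Finset.sum_add_distrib]

lemma mdeg_zero : mdeg (0 : Fin n →₀ ℕ) = 0 := by simp [mdeg]

lemma mdeg_single (i : Fin n) : mdeg (Finsupp.single i 1) = 1 := by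
  simp [mdeg, Finsupp.single_apply]

lemma mdeg_le_totalDegree {p : MvPolynomial (Fin n) ℝ} {α : Fin n →₀ ℕ}
    (h : α ∈ p.support) : mdeg α ≤ p.totalDegree := by
  rw [mdeg_eq]; exact MvPolynomial.le_totalDegree h

variable (y : (Fin n →₀ ℕ) → ℝ)

lemma Riesz_superset {p : MvPolynomial (Fin n) ℝ} {S : Finset (Fin n →₀ ℕ)}
    (hS : p.support ⊆ S) : Riesz y p = ∑ γ ∈ S, p.coeff γ * y γ := by
  unfold Riesz
  exact (Finset.sum_subset (f := fun γ => coeff γ p * y γ) hS (fun γ _ hγ => by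
    simp [MvPolynomial.notMem_support_iff.mp hγ]))

/-- The Riesz functional as a linear map. -/
def RyL : MvPolynomial (Fin n) ℝ →ₗ[ℝ] ℝ where
  toFun := Riesz y
  map_add' p q := by
    show Riesz y (p + q) = Riesz y p + Riesz y q
    rw [Riesz_superset y (p := p + q) (S := p.support ∪ q.support)
        MvPolynomial.support_add,
      Riesz_superset y (S := p.support ∪ q.support) Finset.subset_union_left,
      Riesz_superset y (S := p.support ∪ q.support) Finset.subset_union_right,
      ← Finset.sum_add_distrib]
    simp [MvPolynomial.coeff_add, add_mul]
  map_smul' c p := by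
    show Riesz y (c • p) = c • Riesz y p
    rw [smul_eq_mul, Riesz_superset y (p := c • p) (S := p.support)
      (MvPolynomial.support_smul), Riesz, Finset.mul_sum]
    simp [MvPolynomial.coeff_smul, mul_assoc]

@[simp] lemma RyL_apply (p : MvPolynomial (Fin n) ℝ) : RyL y p = Riesz y p := rfl

lemma Riesz_monomial (γ : Fin n →₀ ℕ) (c : ℝ) : Riesz y (monomial γ c) = c * y γ := by
  rw [Riesz_superset y (S := {γ}) MvPolynomial.support_monomial_subset]
  simp [MvPolynomial.coeff_monomial]

lemma Riesz_C (c : ℝ) : Riesz y (C c) = c * y 0 := by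
  rw [← MvPolynomial.monomial_zero', Riesz_monomial]

lemma Riesz_X (i : Fin n) : Riesz y (X i) = y (Finsupp.single i 1) := by
  rw [MvPolynomial.X, Riesz_monomial, one_mul]

lemma Riesz_smul (c : ℝ) (p : MvPolynomial (Fin n) ℝ) : Riesz y (c • p) = c * Riesz y p :=
  map_smul (RyL y) c p

lemma Riesz_mul (p q : MvPolynomial (Fin n) ℝ) :
    Riesz y (p * q) = ∑ α ∈ p.support, ∑ β ∈ q.support,
      p.coeff α * q.coeff β * y (α + β) := by
  conv_lhs => rw [p.as_sum, q.as_sum, Finset.sum_mul_sum]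
  rw [← RyL_apply, map_sum]
  refine Finset.sum_congr rfl fun α _ => ?_
  rw [map_sum]
  refine Finset.sum_congr rfl fun β _ => ?_
  rw [MvPolynomial.monomial_mul, RyL_apply, Riesz_monomial]

end Aux

namespace Aux

variable {n : ℕ}

lemma degree_eq_mdeg (α : Fin n →₀ ℕ) : Finsupp.degree α = mdeg α := by
  rw [Finsupp.degree, mdeg]
  exact Finset.sum_subset (Finset.subset_univ _) (fun i _ hi => by
    simpa using Finsupp.notMem_support_iff.mp hi)

lemma sum_eq_mdeg (α : Fin n →₀ ℕ) : (α.sum fun _ e => e) = mdeg α := (mdeg_eq α).symm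

variable (y : (Fin n →₀ ℕ) → ℝ)

lemma sum_support_one (z : (Fin n →₀ ℕ) → ℝ) :
    ∑ γ ∈ (1 : MvPolynomial (Fin n) ℝ).support,
      (1 : MvPolynomial (Fin n) ℝ).coeff γ * z γ = z 0 := by
  have : Riesz z (1 : MvPolynomial (Fin n) ℝ) = 1 * z 0 := by
    rw [← MvPolynomial.C_1, Riesz_C]
  rw [one_mul] at this
  exact this

lemma riesz_sq_nonneg {k : ℕ} (hmom : IsPSD (locMat k 1 y))
    (w : MvPolynomial (Fin n) ℝ) (hw : w.totalDegree ≤ k) :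
    0 ≤ Riesz y (w * w) := by
  have hv : (0:ℝ) ≤ ∑ α ∈ w.support, ∑ β ∈ w.support,
      w.coeff α * locMat k 1 y α β * w.coeff β := hmom.2 (AddMonoidAlgebra.coeff w)
  have key : ∑ α ∈ w.support, ∑ β ∈ w.support,
      w.coeff α * locMat k 1 y α β * w.coeff β = Riesz y (w * w) := by
    rw [Riesz_mul]
    refine Finset.sum_congr rfl fun α hα => Finset.sum_congr rfl fun β hβ => ?_
    have hα' : mdeg α ≤ k - halfCeil (1 : MvPolynomial (Fin n) ℝ).totalDegree := by
      simpa [halfCeil, MvPolynomial.totalDegree_one] using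
        le_trans (mdeg_le_totalDegree hα) hw
    have hβ' : mdeg β ≤ k - halfCeil (1 : MvPolynomial (Fin n) ℝ).totalDegree := by
      simpa [halfCeil, MvPolynomial.totalDegree_one] using
        le_trans (mdeg_le_totalDegree hβ) hw
    rw [locMat, if_pos ⟨hα', hβ'⟩, sum_support_one (fun γ => y (α + β + γ))]
    rw [add_zero]
    ring
  linarith [hv, key ▸ hv]

lemma riesz_nonneg_of_loc {k : ℕ} (f : MvPolynomial (Fin n) ℝ)
    (hloc : IsPSD (locMat k f y)) : 0 ≤ Riesz y f := by
  have hv := hloc.2 (Finsupp.single (0 : Fin n →₀ ℕ) (1:ℝ))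
  rw [Finsupp.support_single_ne_zero _ one_ne_zero] at hv
  simp only [Finset.sum_singleton, Finsupp.single_eq_same] at hv
  rw [locMat, if_pos ⟨by simp [mdeg_zero], by simp [mdeg_zero]⟩] at hv
  simpa [Riesz] using hv

lemma td_aeval_le (c : Fin n → MvPolynomial (Fin n) ℝ) (hc : ∀ i, (c i).totalDegree ≤ 1)
    (p : MvPolynomial (Fin n) ℝ) :
    (MvPolynomial.aeval c p).totalDegree ≤ p.totalDegree := by
  conv_lhs => rw [p.as_sum, map_sum]
  refine le_trans (MvPolynomial.totalDegree_finset_sum _ _) (Finset.sup_le fun γ hγ => ?_)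
  refine le_trans ?_ (mdeg_le_totalDegree hγ)
  rw [MvPolynomial.aeval_monomial]
  refine le_trans (MvPolynomial.totalDegree_mul _ _) ?_
  have halg : (algebraMap ℝ (MvPolynomial (Fin n) ℝ) (p.coeff γ)).totalDegree = 0 := by
    rw [MvPolynomial.algebraMap_eq]; exact MvPolynomial.totalDegree_C _
  rw [halg, zero_add, Finsupp.prod]
  refine le_trans (MvPolynomial.totalDegree_finset_prod _ _) ?_
  rw [mdeg_eq, Finsupp.sum]
  refine Finset.sum_le_sum fun i _ => ?_
  refine le_trans (MvPolynomial.totalDegree_pow _ _) ?_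
  calc γ i * (c i).totalDegree ≤ γ i * 1 := Nat.mul_le_mul_left _ (hc i)
  _ = γ i := Nat.mul_one _

lemma support_pderiv {p : MvPolynomial (Fin n) ℝ} {i : Fin n} {γ : Fin n →₀ ℕ}
    (h : γ ∈ (MvPolynomial.pderiv i p).support) :
    γ + Finsupp.single i 1 ∈ p.support := by
  have hc : MvPolynomial.coeff γ (MvPolynomial.pderiv i p) ≠ 0 :=
    MvPolynomial.mem_support_iff.mp h
  have hrw : MvPolynomial.pderiv i p = ∑ δ ∈ p.support,
      MvPolynomial.monomial (δ - Finsupp.single i 1) (p.coeff δ * (δ i : ℝ)) := by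
    conv_lhs => rw [p.as_sum, map_sum]
    simp [MvPolynomial.pderiv_monomial]
  rw [hrw, MvPolynomial.coeff_sum] at hc
  obtain ⟨δ, hδmem, hδ⟩ := Finset.exists_ne_zero_of_sum_ne_zero hc
  rw [MvPolynomial.coeff_monomial] at hδ
  by_cases he : δ - Finsupp.single i 1 = γ
  · rw [if_pos he] at hδ
    have hδi : δ i ≠ 0 := by
      intro h0; rw [h0] at hδ; simp at hδ
    have : δ = γ + Finsupp.single i 1 := by
      ext j
      have h2 := DFunLike.congr_fun he j
      rw [Finsupp.tsub_apply] at h2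
      rw [Finsupp.add_apply]
      rcases eq_or_ne j i with rfl | hj
      · rw [Finsupp.single_eq_same] at h2 ⊢
        omega
      · rw [Finsupp.single_eq_of_ne' (Ne.symm hj)] at h2 ⊢
        omega
    rwa [← this]
  · rw [if_neg he] at hδ; exact absurd rfl hδ

lemma sumsq_eq_zero {L : ℕ} {p : Fin L → MvPolynomial (Fin n) ℝ}
    (h : ∑ l, p l ^ 2 = 0) (l : Fin L) : p l = 0 := by
  apply MvPolynomial.funext
  intro x
  have hx : ∑ j, (MvPolynomial.eval x (p j)) ^ 2 = 0 := by
    have := congrArg (MvPolynomial.eval x) h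
    simpa [map_sum] using this
  have := (Finset.sum_eq_zero_iff_of_nonneg (fun j _ => sq_nonneg _)).mp hx l
    (Finset.mem_univ l)
  simpa using pow_eq_zero_iff (n := 2) (by norm_num) |>.mp this

lemma homComp_td_ne_zero {p : MvPolynomial (Fin n) ℝ} (hp : p ≠ 0) :
    MvPolynomial.homogeneousComponent p.totalDegree p ≠ 0 := by
  obtain ⟨γ, hγmem, hγ⟩ := Finset.exists_mem_eq_sup p.support
    (MvPolynomial.support_nonempty.mpr hp) (fun s => s.sum fun _ e => e)
  intro h0
  have := congrArg (MvPolynomial.coeff γ) h0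
  rw [MvPolynomial.coeff_homogeneousComponent] at this
  rw [if_pos (by rw [degree_eq_mdeg, ← sum_eq_mdeg, ← hγ]; rfl)] at this
  exact MvPolynomial.mem_support_iff.mp hγmem (by simpa using this)

lemma homComp_mul_top {a b : MvPolynomial (Fin n) ℝ} {d : ℕ}
    (ha : a.totalDegree ≤ d) (hb : b.totalDegree ≤ d) :
    MvPolynomial.homogeneousComponent (d + d) (a * b) =
      MvPolynomial.homogeneousComponent d a * MvPolynomial.homogeneousComponent d b := by
  apply MvPolynomial.ext
  intro γ
  rw [MvPolynomial.coeff_homogeneousComponent, MvPolynomial.coeff_mul,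
    MvPolynomial.coeff_mul]
  by_cases hγ : Finsupp.degree γ = d + d
  · rw [if_pos hγ]
    refine Finset.sum_congr rfl fun ab hab => ?_
    rw [Finset.HasAntidiagonal.mem_antidiagonal] at hab
    have hdeg : mdeg ab.1 + mdeg ab.2 = d + d := by
      rw [← mdeg_add, hab, ← degree_eq_mdeg, hγ]
    rw [MvPolynomial.coeff_homogeneousComponent, MvPolynomial.coeff_homogeneousComponent,
      degree_eq_mdeg, degree_eq_mdeg]
    by_cases h1 : mdeg ab.1 = d
    · rw [if_pos h1, if_pos (by omega)]
    · rw [if_neg h1]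
      by_cases h1' : mdeg ab.1 < d
      · have h2 : d < mdeg ab.2 := by omega
        have : MvPolynomial.coeff ab.2 b = 0 := by
          apply MvPolynomial.coeff_eq_zero_of_totalDegree_lt
          show _ < Finsupp.degree ab.2
          rw [degree_eq_mdeg]; omega
        rw [this, mul_zero]
        by_cases h2' : mdeg ab.2 = d
        · omega
        · rw [if_neg h2', mul_zero]
      · have h2 : d < mdeg ab.1 := by omega
        have : MvPolynomial.coeff ab.1 a = 0 := by
          apply MvPolynomial.coeff_eq_zero_of_totalDegree_lt
          show _ < Finsupp.degree ab.1
          rw [degree_eq_mdeg]; omega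
        rw [this, zero_mul]
        by_cases h2' : mdeg ab.2 = d
        · omega
        · rw [if_neg h2', mul_zero]
  · rw [if_neg hγ]
    refine (Finset.sum_eq_zero fun ab hab => ?_).symm
    rw [Finset.HasAntidiagonal.mem_antidiagonal] at hab
    rw [MvPolynomial.coeff_homogeneousComponent, MvPolynomial.coeff_homogeneousComponent,
      degree_eq_mdeg, degree_eq_mdeg]
    by_cases h1 : mdeg ab.1 = d
    · by_cases h2 : mdeg ab.2 = d
      · exfalso
        apply hγ
        rw [degree_eq_mdeg, ← hab, mdeg_add, h1, h2]
      · rw [if_neg h2, mul_zero]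
    · rw [if_neg h1, zero_mul]

lemma sos_td {L : ℕ} (p : Fin L → MvPolynomial (Fin n) ℝ) (l : Fin L) (hl : p l ≠ 0) :
    2 * (p l).totalDegree ≤ (∑ j, p j ^ 2).totalDegree := by
  by_contra hcon
  push_neg at hcon
  set d := Finset.univ.sup (fun j => (p j).totalDegree) with hd
  have hld : (p l).totalDegree ≤ d := by rw [hd]; exact Finset.le_sup (f := fun j => (p j).totalDegree) (Finset.mem_univ l)
  have hq : (∑ j, p j ^ 2).totalDegree < d + d := by omega
  have hzero : MvPolynomial.homogeneousComponent (d + d) (∑ j, p j ^ 2) = 0 :=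
    MvPolynomial.homogeneousComponent_eq_zero _ _ hq
  rw [map_sum] at hzero
  have hcomp : ∀ j, MvPolynomial.homogeneousComponent (d + d) (p j ^ 2) =
      (MvPolynomial.homogeneousComponent d (p j)) ^ 2 := by
    intro j
    rw [sq, sq]
    exact homComp_mul_top (by rw [hd]; exact Finset.le_sup (f := fun j => (p j).totalDegree) (Finset.mem_univ j))
      (by rw [hd]; exact Finset.le_sup (f := fun j => (p j).totalDegree) (Finset.mem_univ j))
  simp_rw [hcomp] at hzero
  obtain ⟨j₁, _, hj₁⟩ := Finset.exists_mem_eq_sup Finset.univ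
    ⟨l, Finset.mem_univ l⟩ (fun j => (p j).totalDegree)
  rw [← hd] at hj₁
  by_cases hpj : p j₁ = 0
  · have hd0 : d = 0 := by rw [hj₁, hpj]; exact MvPolynomial.totalDegree_zero
    have : (p l).totalDegree = 0 := le_antisymm (hd0 ▸ hld) (Nat.zero_le _)
    omega
  · have := sumsq_eq_zero hzero j₁
    rw [hj₁] at this
    exact homComp_td_ne_zero hpj this

end Aux


namespace Aux

open Polynomial in
/-- The substitution `x_i ↦ u_i + t (x_i - u_i)` into `A[t]`. -/
noncomputable def Phi {n : ℕ} (u : Fin n → ℝ) :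
    MvPolynomial (Fin n) ℝ →ₐ[ℝ] Polynomial (MvPolynomial (Fin n) ℝ) :=
  MvPolynomial.aeval (fun i => Polynomial.C (MvPolynomial.C (u i)) +
    Polynomial.X * Polynomial.C (MvPolynomial.X i - MvPolynomial.C (u i)))

variable {n : ℕ} (u : Fin n → ℝ)

lemma Phi_X (i : Fin n) : Phi u (X i) =
    Polynomial.C (MvPolynomial.C (u i)) +
      Polynomial.X * Polynomial.C (MvPolynomial.X i - MvPolynomial.C (u i)) := by
  rw [Phi, MvPolynomial.aeval_X]

lemma derivative_Phi (g : MvPolynomial (Fin n) ℝ) :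
    Polynomial.derivative (Phi u g) =
      ∑ i, Phi u (MvPolynomial.pderiv i g) *
        Polynomial.C (MvPolynomial.X i - MvPolynomial.C (u i)) := by
  induction g using MvPolynomial.induction_on with
  | C a => simp [Phi]
  | add p q hp hq => simp [map_add, hp, hq, add_mul, Finset.sum_add_distrib]
  | mul_X p i hp =>
    have key : ∀ j, MvPolynomial.pderiv j (p * X i) =
        MvPolynomial.pderiv j p * X i + (if j = i then p else 0) := by
      intro j
      rw [MvPolynomial.pderiv_mul]
      congr 1
      rcases eq_or_ne j i with rfl | hj
      · simp
      · simp [MvPolynomial.pderiv_X_of_ne (Ne.symm hj), hj]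
    have h2 : ∑ j, (if j = i then Phi u p else 0) *
        Polynomial.C (MvPolynomial.X j - MvPolynomial.C (u j)) =
        Phi u p * Polynomial.C (MvPolynomial.X i - MvPolynomial.C (u i)) := by
      rw [Finset.sum_eq_single i]
      · simp
      · intro j _ hj; simp [hj]
      · intro h; exact absurd (Finset.mem_univ i) h
    have h3 : Polynomial.derivative (Phi u (X i)) =
        Polynomial.C (MvPolynomial.X i - MvPolynomial.C (u i)) := by
      rw [Phi_X]; simp
    have h4 : ∀ j, Phi u (MvPolynomial.pderiv j (p * X i)) =
        Phi u (MvPolynomial.pderiv j p) * Phi u (X i) +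
          (if j = i then Phi u p else 0) := by
      intro j; rw [key j, map_add, map_mul, apply_ite (Phi u), map_zero]
    rw [map_mul, Polynomial.derivative_mul, hp, h3]
    calc (∑ j, Phi u (MvPolynomial.pderiv j p) *
            Polynomial.C (MvPolynomial.X j - MvPolynomial.C (u j))) * Phi u (X i) +
          Phi u p * Polynomial.C (MvPolynomial.X i - MvPolynomial.C (u i))
        = ∑ j, Phi u (MvPolynomial.pderiv j p) * Phi u (X i) *
            Polynomial.C (MvPolynomial.X j - MvPolynomial.C (u j)) +
          Phi u p * Polynomial.C (MvPolynomial.X i - MvPolynomial.C (u i)) := by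
          rw [Finset.sum_mul]
          refine congrArg (· + _) ?_
          exact Finset.sum_congr rfl fun j _ => by ring
      _ = ∑ j, (Phi u (MvPolynomial.pderiv j p) * Phi u (X i) +
            (if j = i then Phi u p else 0)) *
            Polynomial.C (MvPolynomial.X j - MvPolynomial.C (u j)) := by
          rw [Finset.sum_congr rfl (fun j _ => add_mul _ _ _), Finset.sum_add_distrib, h2]
      _ = ∑ j, Phi u (MvPolynomial.pderiv j (p * X i)) *
            Polynomial.C (MvPolynomial.X j - MvPolynomial.C (u j)) :=
          Finset.sum_congr rfl fun j _ => (congrArg (· * _) (h4 j)).symm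

variable (y : (Fin n →₀ ℕ) → ℝ)

open Polynomial in
/-- Apply the Riesz functional coefficientwise. -/
noncomputable def mapRy : Polynomial (MvPolynomial (Fin n) ℝ) → Polynomial ℝ :=
  fun q => q.sum fun m a => Polynomial.C (Riesz y a) * Polynomial.X ^ m

@[simp] lemma Riesz_zero : Riesz y (0 : MvPolynomial (Fin n) ℝ) = 0 := by simp [Riesz]

lemma Riesz_add (p q : MvPolynomial (Fin n) ℝ) :
    Riesz y (p + q) = Riesz y p + Riesz y q := map_add (RyL y) p q

lemma Riesz_sub (p q : MvPolynomial (Fin n) ℝ) :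
    Riesz y (p - q) = Riesz y p - Riesz y q := map_sub (RyL y) p q

lemma Riesz_neg (p : MvPolynomial (Fin n) ℝ) : Riesz y (-p) = - Riesz y p :=
  map_neg (RyL y) p

lemma mapRy_monomial (m : ℕ) (a : MvPolynomial (Fin n) ℝ) :
    mapRy y (Polynomial.monomial m a) = Polynomial.monomial m (Riesz y a) := by
  rw [mapRy, Polynomial.sum_monomial_index _ _ (by simp), Polynomial.C_mul_X_pow_eq_monomial]

lemma mapRy_add (q r : Polynomial (MvPolynomial (Fin n) ℝ)) :
    mapRy y (q + r) = mapRy y q + mapRy y r := by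
  rw [mapRy, mapRy, mapRy, Polynomial.sum_add_index]
  · intro m; simp
  · intro m a b; rw [Riesz_add, map_add, add_mul]

lemma mapRy_derivative (q : Polynomial (MvPolynomial (Fin n) ℝ)) :
    mapRy y (Polynomial.derivative q) = Polynomial.derivative (mapRy y q) := by
  induction q using Polynomial.induction_on' with
  | add p r hp hr => rw [map_add, mapRy_add, hp, hr, mapRy_add, map_add]
  | monomial m a =>
    rw [Polynomial.derivative_monomial, mapRy_monomial, mapRy_monomial,
      Polynomial.derivative_monomial]
    congr 1
    have h1 : a * (m : MvPolynomial (Fin n) ℝ) = ((m : ℝ)) • a := by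
      rw [MvPolynomial.smul_eq_C_mul, map_natCast MvPolynomial.C, mul_comm]
    rw [h1, Riesz_smul]
    ring

lemma eval_mapRy (t : ℝ) (q : Polynomial (MvPolynomial (Fin n) ℝ)) :
    (mapRy y q).eval t = Riesz y (q.eval (MvPolynomial.C t)) := by
  induction q using Polynomial.induction_on' with
  | add p r hp hr => rw [mapRy_add, Polynomial.eval_add, hp, hr,
      Polynomial.eval_add, Riesz_add]
  | monomial m a =>
    rw [mapRy_monomial, Polynomial.eval_monomial, Polynomial.eval_monomial]
    have h1 : a * MvPolynomial.C t ^ m = (t ^ m) • a := by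
      rw [← map_pow, MvPolynomial.smul_eq_C_mul, mul_comm]
    rw [h1, Riesz_smul]
    ring

lemma aeval_C_apply (p : MvPolynomial (Fin n) ℝ) :
    MvPolynomial.aeval (fun i => (MvPolynomial.C (u i) : MvPolynomial (Fin n) ℝ)) p =
      MvPolynomial.C (MvPolynomial.eval u p) := by
  induction p using MvPolynomial.induction_on with
  | C a => rw [MvPolynomial.aeval_C, MvPolynomial.eval_C, MvPolynomial.algebraMap_eq]
  | add p q hp hq => rw [map_add, hp, hq, map_add, map_add]
  | mul_X p i hp =>
    rw [map_mul, hp, MvPolynomial.aeval_X, map_mul, map_mul, MvPolynomial.eval_X]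

/-- The substitution at a fixed parameter value `t`. -/
noncomputable def sigt (t : ℝ) : MvPolynomial (Fin n) ℝ →ₐ[ℝ] MvPolynomial (Fin n) ℝ :=
  MvPolynomial.aeval (fun i => MvPolynomial.C (u i) +
    MvPolynomial.C t * (MvPolynomial.X i - MvPolynomial.C (u i)))

lemma eval_C_Phi (t : ℝ) (g : MvPolynomial (Fin n) ℝ) :
    Polynomial.eval (MvPolynomial.C t) (Phi u g) = sigt u t g := by
  induction g using MvPolynomial.induction_on with
  | C a => simp [Phi, sigt, MvPolynomial.aeval_C, Polynomial.algebraMap_apply]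
  | add p q hp hq => simp [map_add, hp, hq]
  | mul_X p i hp => rw [map_mul, Polynomial.eval_mul, hp, map_mul]
                    congr 1
                    rw [Phi_X, sigt, MvPolynomial.aeval_X]
                    simp [mul_comm]

lemma td_sigt_le (t : ℝ) (p : MvPolynomial (Fin n) ℝ) :
    (sigt u t p).totalDegree ≤ p.totalDegree := by
  refine td_aeval_le _ (fun i => ?_) p
  refine le_trans (MvPolynomial.totalDegree_add _ _) (max_le (by simp) ?_)
  refine le_trans (MvPolynomial.totalDegree_mul _ _) ?_
  rw [MvPolynomial.totalDegree_C, zero_add, sub_eq_add_neg]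
  refine le_trans (MvPolynomial.totalDegree_add _ _) (max_le (by simp) ?_)
  rw [MvPolynomial.totalDegree_neg, MvPolynomial.totalDegree_C]
  exact Nat.zero_le _

lemma sig0_eq (p : MvPolynomial (Fin n) ℝ) :
    sigt u 0 p = MvPolynomial.C (MvPolynomial.eval u p) := by
  rw [sigt]
  have h1 : (fun i => MvPolynomial.C (u i) +
      MvPolynomial.C (0:ℝ) * (MvPolynomial.X i - MvPolynomial.C (u i))) =
      (fun i => (MvPolynomial.C (u i) : MvPolynomial (Fin n) ℝ)) := by
    funext i; simp
  rw [h1]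
  exact aeval_C_apply u p

lemma sig1_eq (p : MvPolynomial (Fin n) ℝ) : sigt u 1 p = p := by
  rw [sigt]
  have h1 : (fun i => MvPolynomial.C (u i) +
      MvPolynomial.C (1:ℝ) * (MvPolynomial.X i - MvPolynomial.C (u i))) =
      MvPolynomial.X (R := ℝ) := by
    funext i; simp
  rw [h1, MvPolynomial.aeval_X_left_apply]

end Aux

namespace Aux

variable {n : ℕ}

lemma td_X_sub_C_le (u : Fin n → ℝ) (i : Fin n) :
    (MvPolynomial.X i - MvPolynomial.C (u i) : MvPolynomial (Fin n) ℝ).totalDegree ≤ 1 := by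
  rw [sub_eq_add_neg]
  refine le_trans (MvPolynomial.totalDegree_add _ _) (max_le (by simp) ?_)
  rw [MvPolynomial.totalDegree_neg, MvPolynomial.totalDegree_C]
  exact Nat.zero_le _

end Aux

/-- Let `f` be sos-concave, `k ≥ ⌈deg f/2⌉`, and let `y` satisfy `y_0 = 1`
with the moment matrix `L_1^{(k)}[y]` and the localizing matrix `L_f^{(k)}[y]` positive
semidefinite. Then, for `u := (y_{e_1},…,y_{e_n})`, one has `f(u) ≥ R_y(f) ≥ 0`. -/
theorem sos_concave_bound {n k : ℕ} (f : MvPolynomial (Fin n) ℝ)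
    (hconc : SosConcave f) (hk : halfCeil f.totalDegree ≤ k)
    (y : (Fin n →₀ ℕ) → ℝ) (hy0 : y 0 = 1)
    (hmom : IsPSD (locMat k (1 : MvPolynomial (Fin n) ℝ) y))
    (hloc : IsPSD (locMat k f y))
    (u : Fin n → ℝ) (hu : ∀ i, u i = y (Finsupp.single i 1)) :
    Riesz y f ≤ MvPolynomial.eval u f ∧ 0 ≤ Riesz y f := by
  refine ⟨?_, Aux.riesz_nonneg_of_loc y f hloc⟩
  obtain ⟨L, P, hP⟩ := hconc
  set g : MvPolynomial (Fin n) ℝ := -f with hg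
  have htdf : f.totalDegree ≤ 2 * k := by unfold halfCeil at hk; omega
  have htdg : g.totalDegree = f.totalDegree := MvPolynomial.totalDegree_neg f
  -- degree bound on the entries of P
  have hPdeg : ∀ l i, P l i ≠ 0 → (P l i).totalDegree + 1 ≤ k := by
    intro l i hne
    have hq : MvPolynomial.pderiv i (MvPolynomial.pderiv i g) =
        ∑ l, (fun l => P l i) l ^ 2 := by
      simpa [hg, sq] using hP i i
    have h2td := Aux.sos_td (fun l => P l i) l hne
    rw [← hq] at h2td
    have hqne : MvPolynomial.pderiv i (MvPolynomial.pderiv i g) ≠ 0 := by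
      intro h0
      exact hne (Aux.sumsq_eq_zero (p := fun l => P l i) (by rw [← hq, h0]) l)
    obtain ⟨γ, hγmem, hγ⟩ := Finset.exists_mem_eq_sup _
      (MvPolynomial.support_nonempty.mpr hqne) (fun s : Fin n →₀ ℕ => s.sum fun _ e => e)
    have htd : (MvPolynomial.pderiv i (MvPolynomial.pderiv i g)).totalDegree = mdeg γ := by
      rw [MvPolynomial.totalDegree, hγ, Aux.sum_eq_mdeg]
    have hm1 : γ + Finsupp.single i 1 ∈ (MvPolynomial.pderiv i g).support :=
      Aux.support_pderiv hγmem
    have hm2 : γ + Finsupp.single i 1 + Finsupp.single i 1 ∈ g.support :=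
      Aux.support_pderiv hm1
    have hb := Aux.mdeg_le_totalDegree hm2
    rw [Aux.mdeg_add, Aux.mdeg_add, Aux.mdeg_single] at hb
    rw [htd] at h2td
    have h2td' : 2 * (P l i).totalDegree ≤ mdeg γ := h2td
    omega
  -- the univariate polynomial H(t) = R_y(g(u + t(x-u)))
  set H : Polynomial ℝ := Aux.mapRy y (Aux.Phi u g) with hH
  have h1H : H.eval 1 = Riesz y g := by
    rw [hH, Aux.eval_mapRy, Aux.eval_C_Phi, Aux.sig1_eq]
  have h0H : H.eval 0 = MvPolynomial.eval u g := by
    rw [hH, Aux.eval_mapRy, Aux.eval_C_Phi, Aux.sig0_eq, Aux.Riesz_C, hy0, mul_one]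
  have hD1 := Aux.derivative_Phi u g
  have h0H' : (Polynomial.derivative H).eval 0 = 0 := by
    rw [hH, ← Aux.mapRy_derivative, Aux.eval_mapRy, hD1, Polynomial.eval_finset_sum]
    have hterm : ∀ i : Fin n, Polynomial.eval (MvPolynomial.C (0:ℝ))
        (Aux.Phi u (MvPolynomial.pderiv i g) *
          Polynomial.C (MvPolynomial.X i - MvPolynomial.C (u i))) =
        MvPolynomial.C (MvPolynomial.eval u (MvPolynomial.pderiv i g)) *
          (MvPolynomial.X i - MvPolynomial.C (u i)) := by
      intro i
      rw [Polynomial.eval_mul, Polynomial.eval_C, Aux.eval_C_Phi, Aux.sig0_eq]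
    rw [Finset.sum_congr rfl (fun i _ => hterm i), ← Aux.RyL_apply, map_sum]
    refine Finset.sum_eq_zero fun i _ => ?_
    rw [Aux.RyL_apply, mul_sub, ← MvPolynomial.C_mul, Aux.Riesz_sub, Aux.Riesz_C]
    have hmon : (MvPolynomial.C (MvPolynomial.eval u (MvPolynomial.pderiv i g)) :
        MvPolynomial (Fin n) ℝ) * MvPolynomial.X i =
        MvPolynomial.monomial (Finsupp.single i 1)
          (MvPolynomial.eval u (MvPolynomial.pderiv i g)) := by
      rw [← MvPolynomial.C_mul_X_pow_eq_monomial, pow_one]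
    rw [hmon, Aux.Riesz_monomial, hy0, mul_one, ← hu i]
    ring
  have hH2 : ∀ t : ℝ, 0 ≤ (Polynomial.derivative (Polynomial.derivative H)).eval t := by
    intro t
    have hD2 : Polynomial.derivative (Polynomial.derivative (Aux.Phi u g)) =
        ∑ l, (∑ i, Aux.Phi u (P l i) *
          Polynomial.C (MvPolynomial.X i - MvPolynomial.C (u i))) ^ 2 := by
      rw [hD1, map_sum]
      calc ∑ i, Polynomial.derivative (Aux.Phi u (MvPolynomial.pderiv i g) *
              Polynomial.C (MvPolynomial.X i - MvPolynomial.C (u i)))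
          = ∑ i, ∑ j, ∑ l, Aux.Phi u (P l j) * Aux.Phi u (P l i) *
              Polynomial.C (MvPolynomial.X j - MvPolynomial.C (u j)) *
              Polynomial.C (MvPolynomial.X i - MvPolynomial.C (u i)) := by
            refine Finset.sum_congr rfl fun i _ => ?_
            rw [Polynomial.derivative_mul, Polynomial.derivative_C, mul_zero, add_zero,
              Aux.derivative_Phi, Finset.sum_mul]
            refine Finset.sum_congr rfl fun j _ => ?_
            rw [show MvPolynomial.pderiv j (MvPolynomial.pderiv i g) = ∑ l, P l j * P l i
              from by rw [hg]; exact hP j i]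
            rw [map_sum, Finset.sum_mul, Finset.sum_mul]
            refine Finset.sum_congr rfl fun l _ => ?_
            rw [map_mul]
        _ = ∑ l, ∑ i, ∑ j, Aux.Phi u (P l j) * Aux.Phi u (P l i) *
              Polynomial.C (MvPolynomial.X j - MvPolynomial.C (u j)) *
              Polynomial.C (MvPolynomial.X i - MvPolynomial.C (u i)) := by
            rw [Finset.sum_congr rfl fun i _ => Finset.sum_comm]
            exact Finset.sum_comm
        _ = ∑ l, (∑ i, Aux.Phi u (P l i) *
              Polynomial.C (MvPolynomial.X i - MvPolynomial.C (u i))) ^ 2 := by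
            refine Finset.sum_congr rfl fun l _ => ?_
            rw [sq, Finset.sum_mul_sum]
            exact Finset.sum_congr rfl fun i _ => Finset.sum_congr rfl fun j _ => by ring
    rw [hH, ← Aux.mapRy_derivative, ← Aux.mapRy_derivative, Aux.eval_mapRy, hD2,
      Polynomial.eval_finset_sum, ← Aux.RyL_apply, map_sum]
    refine Finset.sum_nonneg fun l _ => ?_
    rw [Polynomial.eval_pow, Aux.RyL_apply, sq]
    refine Aux.riesz_sq_nonneg y hmom _ ?_
    rw [Polynomial.eval_finset_sum]
    refine le_trans (MvPolynomial.totalDegree_finset_sum _ _)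
      (Finset.sup_le fun i _ => ?_)
    rw [Polynomial.eval_mul, Polynomial.eval_C, Aux.eval_C_Phi]
    by_cases hPi : P l i = 0
    · rw [hPi, map_zero, zero_mul]
      simp
    · refine le_trans (MvPolynomial.totalDegree_mul _ _) ?_
      have e1 := Aux.td_sigt_le u t (P l i)
      have e2 := Aux.td_X_sub_C_le u i
      have e3 := hPdeg l i hPi
      omega
  -- calculus: H'' ≥ 0 everywhere and H'(0) = 0 imply H(1) ≥ H(0)
  have hmono : Monotone fun t : ℝ => (Polynomial.derivative H).eval t := by
    refine monotone_of_deriv_nonneg (Polynomial.differentiable _) fun x => ?_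
    rw [Polynomial.deriv]
    exact hH2 x
  obtain ⟨c, hc, hceq⟩ := exists_deriv_eq_slope (fun t : ℝ => H.eval t) zero_lt_one
    (Polynomial.continuous H).continuousOn
    (fun x _ => ((Polynomial.differentiable H) x).differentiableWithinAt)
  rw [Polynomial.deriv] at hceq
  have hcpos : 0 ≤ (Polynomial.derivative H).eval c := by
    have := hmono (le_of_lt hc.1)
    simpa [h0H'] using this
  have hfinal : MvPolynomial.eval u g ≤ Riesz y g := by
    rw [← h1H, ← h0H]
    have h10 : H.eval 1 - H.eval 0 = (H.eval 1 - H.eval 0) / (1 - 0) := by norm_num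
    linarith [hceq ▸ hcpos, h10]
  rw [hg, Aux.Riesz_neg] at hfinal
  have : MvPolynomial.eval u (-f) = - MvPolynomial.eval u f := by simp
  rw [this] at hfinal
  linarith
end

section
/- (Theorem 2.5) Assume the polynomials f_1,…,f_r and h_1,…,h_t are all sos-concave. Then for every k ≥ d, the semidefinite relaxation set S_k equals C ∩ H. No assumption that C or H has nonempty interior is needed. -/
open MvPolynomial Finsupp

noncomputable section



lemma mdeg_eq_sum {n : ℕ} (α : Fin n →₀ ℕ) : mdeg α = α.sum fun _ e => e := by
  rw [mdeg, Finsupp.sum_fintype] ; intro ; rfl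

lemma mdeg_le_totalDegree {n : ℕ} {p : MvPolynomial (Fin n) ℝ} {α : Fin n →₀ ℕ}
    (hα : α ∈ p.support) : mdeg α ≤ p.totalDegree := by
  rw [mdeg_eq_sum]; exact MvPolynomial.le_totalDegree hα

lemma mdeg_add {n : ℕ} (α β : Fin n →₀ ℕ) : mdeg (α + β) = mdeg α + mdeg β := by
  simp [mdeg, Finset.sum_add_distrib]

lemma mdeg_zero {n : ℕ} : mdeg (0 : Fin n →₀ ℕ) = 0 := by simp [mdeg]

lemma halfCeil_le_iff {m k : ℕ} : halfCeil m ≤ k ↔ m ≤ 2 * k := by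
  rw [halfCeil, Nat.div_le_iff_le_mul_add_pred (by norm_num)]; omega

lemma Riesz_eq_sum_subset {n : ℕ} (y : (Fin n →₀ ℕ) → ℝ) {p : MvPolynomial (Fin n) ℝ}
    {s : Finset (Fin n →₀ ℕ)} (hs : p.support ⊆ s) :
    Riesz y p = ∑ γ ∈ s, p.coeff γ * y γ := by
  refine Finset.sum_subset hs fun γ _ hγ => ?_
  rw [MvPolynomial.notMem_support_iff.mp hγ, zero_mul]

lemma Riesz_add {n : ℕ} (y : (Fin n →₀ ℕ) → ℝ) (p q : MvPolynomial (Fin n) ℝ) :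
    Riesz y (p + q) = Riesz y p + Riesz y q := by
  rw [Riesz_eq_sum_subset y (s := p.support ∪ q.support) (MvPolynomial.support_add),
    Riesz_eq_sum_subset y (Finset.subset_union_left (s₂ := q.support)),
    Riesz_eq_sum_subset y (Finset.subset_union_right (s₁ := p.support)), ← Finset.sum_add_distrib]
  simp [coeff_add, add_mul]

lemma Riesz_zero {n : ℕ} (y : (Fin n →₀ ℕ) → ℝ) : Riesz y 0 = 0 := by simp [Riesz]

lemma Riesz_sum {n : ℕ} (y : (Fin n →₀ ℕ) → ℝ) {ι : Type*} (s : Finset ι)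
    (p : ι → MvPolynomial (Fin n) ℝ) :
    Riesz y (∑ i ∈ s, p i) = ∑ i ∈ s, Riesz y (p i) := by
  classical
  induction s using Finset.induction with
  | empty => simp [Riesz_zero]
  | insert _ _ h ih => rw [Finset.sum_insert h, Finset.sum_insert h, Riesz_add, ih]

lemma Riesz_monomial {n : ℕ} (y : (Fin n →₀ ℕ) → ℝ) (γ : Fin n →₀ ℕ) (c : ℝ) :
    Riesz y (monomial γ c) = c * y γ := by
  rcases eq_or_ne c 0 with rfl | hc
  · simp [Riesz]
  · rw [Riesz, support_monomial, if_neg hc, Finset.sum_singleton, coeff_monomial, if_pos rfl]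

lemma Riesz_smul {n : ℕ} (y : (Fin n →₀ ℕ) → ℝ) (c : ℝ) (p : MvPolynomial (Fin n) ℝ) :
    Riesz y (c • p) = c * Riesz y p := by
  rw [Riesz_eq_sum_subset y (s := p.support) (MvPolynomial.support_smul), Riesz, Finset.mul_sum]
  refine Finset.sum_congr rfl fun γ _ => ?_
  rw [MvPolynomial.coeff_smul, smul_eq_mul, mul_assoc]

lemma Riesz_neg {n : ℕ} (y : (Fin n →₀ ℕ) → ℝ) (p : MvPolynomial (Fin n) ℝ) :
    Riesz y (-p) = - Riesz y p := by
  have := Riesz_smul y (-1) p; simpa using this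

lemma Riesz_C {n : ℕ} (y : (Fin n →₀ ℕ) → ℝ) (c : ℝ) :
    Riesz y (MvPolynomial.C c) = c * y 0 := by
  rw [← Riesz_monomial y 0 c]; rfl

lemma Riesz_X {n : ℕ} (y : (Fin n →₀ ℕ) → ℝ) (i : Fin n) :
    Riesz y (MvPolynomial.X i) = y (Finsupp.single i 1) := by
  rw [MvPolynomial.X, Riesz_monomial, one_mul]

lemma Riesz_mul_expand {n : ℕ} (y : (Fin n →₀ ℕ) → ℝ) (p q : MvPolynomial (Fin n) ℝ) :
    Riesz y (p * q) = ∑ α ∈ p.support, ∑ β ∈ q.support,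
      p.coeff α * q.coeff β * y (α + β) := by
  conv_lhs => rw [p.as_sum, q.as_sum, Finset.sum_mul_sum]
  rw [Riesz_sum]
  refine Finset.sum_congr rfl fun α _ => ?_
  rw [Riesz_sum]
  refine Finset.sum_congr rfl fun β _ => ?_
  rw [monomial_mul, Riesz_monomial]

lemma riesz_nonneg_of_isPSD {n k : ℕ} {y : (Fin n →₀ ℕ) → ℝ} {p : MvPolynomial (Fin n) ℝ}
    (h : IsPSD (locMat k p y)) : 0 ≤ Riesz y p := by
  have h2 := h.2 (Finsupp.single 0 1)
  rw [Finsupp.support_single_ne_zero _ one_ne_zero, Finset.sum_singleton,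
    Finset.sum_singleton] at h2
  simpa [locMat, mdeg_zero, Riesz] using h2

/-- the coefficient vector of `p` as a finitely supported function -/
def coeffFinsupp {n : ℕ} (p : MvPolynomial (Fin n) ℝ) : (Fin n →₀ ℕ) →₀ ℝ :=
  ⟨p.support, fun α => p.coeff α, fun _ => MvPolynomial.mem_support_iff⟩

lemma riesz_sq_nonneg {n k : ℕ} {y : (Fin n →₀ ℕ) → ℝ}
    (h : IsPSD (locMat k (1 : MvPolynomial (Fin n) ℝ) y)) (p : MvPolynomial (Fin n) ℝ)
    (hp : p.totalDegree ≤ k) : 0 ≤ Riesz y (p * p) := by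
  have h2 := h.2 (coeffFinsupp p)
  have hsup : (coeffFinsupp p).support = p.support := rfl
  rw [hsup] at h2
  rw [Riesz_mul_expand]
  refine le_trans h2 (le_of_eq ?_)
  refine Finset.sum_congr rfl fun α hα => Finset.sum_congr rfl fun β hβ => ?_
  have hα' : mdeg α ≤ k - halfCeil (1 : MvPolynomial (Fin n) ℝ).totalDegree := by
    rw [MvPolynomial.totalDegree_one]
    exact le_trans (le_trans (mdeg_le_totalDegree hα) hp) (by simp [halfCeil])
  have hβ' : mdeg β ≤ k - halfCeil (1 : MvPolynomial (Fin n) ℝ).totalDegree := by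
    rw [MvPolynomial.totalDegree_one]
    exact le_trans (le_trans (mdeg_le_totalDegree hβ) hp) (by simp [halfCeil])
  show p.coeff α * locMat k 1 y α β * p.coeff β = _
  rw [locMat, if_pos ⟨hα', hβ'⟩]
  have hone : (1 : MvPolynomial (Fin n) ℝ).support = {0} := by
    classical
    rw [show (1 : MvPolynomial (Fin n) ℝ) = monomial 0 1 from rfl, support_monomial,
      if_neg one_ne_zero]
  rw [hone, Finset.sum_singleton, MvPolynomial.coeff_one, if_pos rfl, one_mul, add_zero]
  ring
lemma monoEval_zero {n : ℕ} (u : Fin n → ℝ) : monoEval u 0 = 1 := by simp [monoEval]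

lemma monoEval_single {n : ℕ} (u : Fin n → ℝ) (i : Fin n) :
    monoEval u (Finsupp.single i 1) = u i := by
  rw [monoEval, Finset.prod_eq_single i (fun j _ hj => by
    rw [Finsupp.single_apply, if_neg (Ne.symm hj), pow_zero]) (by simp)]
  simp

lemma monoEval_add {n : ℕ} (u : Fin n → ℝ) (α β : Fin n →₀ ℕ) :
    monoEval u (α + β) = monoEval u α * monoEval u β := by
  rw [monoEval, monoEval, monoEval, ← Finset.prod_mul_distrib]
  exact Finset.prod_congr rfl fun i _ => by rw [Finsupp.add_apply, pow_add]

lemma monoEval_eq_prod_support {n : ℕ} (u : Fin n → ℝ) (α : Fin n →₀ ℕ) :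
    monoEval u α = ∏ i ∈ α.support, u i ^ α i := by
  rw [monoEval]
  refine (Finset.prod_subset (Finset.subset_univ _) fun i _ hi => ?_).symm
  rw [Finsupp.notMem_support_iff.mp hi, pow_zero]

lemma eval_eq_sum_monoEval {n : ℕ} (u : Fin n → ℝ) (p : MvPolynomial (Fin n) ℝ) :
    MvPolynomial.eval u p = ∑ γ ∈ p.support, p.coeff γ * monoEval u γ := by
  rw [MvPolynomial.eval_eq]
  exact Finset.sum_congr rfl fun α _ => by rw [monoEval_eq_prod_support]

lemma eval_eq_riesz {n : ℕ} (u : Fin n → ℝ) (p : MvPolynomial (Fin n) ℝ) :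
    MvPolynomial.eval u p = Riesz (monoEval u) p := by
  rw [eval_eq_sum_monoEval, Riesz]

lemma isPSD_locMat_monoEval {n k : ℕ} (u : Fin n → ℝ) (p : MvPolynomial (Fin n) ℝ)
    (hp : 0 ≤ MvPolynomial.eval u p) : IsPSD (locMat k p (monoEval u)) := by
  constructor
  · intro α β
    simp only [locMat, and_comm, add_comm α β]
  · intro v
    have key : ∀ α β : Fin n →₀ ℕ, v α * locMat k p (monoEval u) α β * v β =
        ((if mdeg α ≤ k - halfCeil p.totalDegree then v α * monoEval u α else 0) *
         (if mdeg β ≤ k - halfCeil p.totalDegree then v β * monoEval u β else 0)) *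
          MvPolynomial.eval u p := by
      intro α β
      rw [locMat]
      by_cases hα : mdeg α ≤ k - halfCeil p.totalDegree
      · by_cases hβ : mdeg β ≤ k - halfCeil p.totalDegree
        · rw [if_pos ⟨hα, hβ⟩, if_pos hα, if_pos hβ, eval_eq_sum_monoEval]
          rw [Finset.mul_sum, Finset.sum_mul, Finset.mul_sum]
          refine Finset.sum_congr rfl fun γ _ => ?_
          rw [monoEval_add, monoEval_add]
          ring
        · rw [if_neg (fun hc => hβ hc.2), if_neg hβ]; ring
      · rw [if_neg (fun hc => hα hc.1), if_neg hα]; ring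
    calc (0:ℝ) ≤ (∑ α ∈ v.support, if mdeg α ≤ k - halfCeil p.totalDegree
          then v α * monoEval u α else 0)^2 * MvPolynomial.eval u p :=
            mul_nonneg (sq_nonneg _) hp
      _ = _ := by
          rw [sq, Finset.sum_mul_sum, Finset.sum_mul]
          refine Finset.sum_congr rfl fun α _ => ?_
          rw [Finset.sum_mul]
          exact Finset.sum_congr rfl fun β _ => (key α β).symm
lemma mdeg_eq_degree {n : ℕ} (α : Fin n →₀ ℕ) : mdeg α = α.degree := by
  rw [mdeg_eq_sum]; rfl

lemma hc_sq {n D : ℕ} (p : MvPolynomial (Fin n) ℝ) (hp : p.totalDegree ≤ D) :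
    homogeneousComponent (D + D) (p * p) =
      homogeneousComponent D p * homogeneousComponent D p := by
  classical
  apply MvPolynomial.ext
  intro α
  rw [coeff_homogeneousComponent, MvPolynomial.coeff_mul, MvPolynomial.coeff_mul]
  by_cases hα : α.degree = D + D
  · rw [if_pos hα]
    refine Finset.sum_congr rfl fun x hx => ?_
    rw [Finset.HasAntidiagonal.mem_antidiagonal] at hx
    rw [coeff_homogeneousComponent, coeff_homogeneousComponent]
    by_cases h1 : coeff x.1 p = 0
    · rw [h1, zero_mul]; split <;> simp [h1]
    by_cases h2 : coeff x.2 p = 0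
    · rw [h2, mul_zero]; split <;> simp [h2]
    have d1 : x.1.degree ≤ D := le_trans (by
      rw [← mdeg_eq_degree]
      exact mdeg_le_totalDegree (MvPolynomial.mem_support_iff.mpr h1)) hp
    have d2 : x.2.degree ≤ D := le_trans (by
      rw [← mdeg_eq_degree]
      exact mdeg_le_totalDegree (MvPolynomial.mem_support_iff.mpr h2)) hp
    have hsum : x.1.degree + x.2.degree = D + D := by
      rw [← mdeg_eq_degree, ← mdeg_eq_degree, ← mdeg_add, hx, mdeg_eq_degree, hα]
    have e1 : x.1.degree = D := by omega
    have e2 : x.2.degree = D := by omega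
    rw [if_pos e1, if_pos e2]
  · rw [if_neg hα]
    refine (Finset.sum_eq_zero fun x hx => ?_).symm
    rw [Finset.HasAntidiagonal.mem_antidiagonal] at hx
    rw [coeff_homogeneousComponent, coeff_homogeneousComponent]
    by_cases e1 : x.1.degree = D
    · by_cases e2 : x.2.degree = D
      · exfalso; apply hα; rw [← hx, ← mdeg_eq_degree, mdeg_add, mdeg_eq_degree, mdeg_eq_degree, e1, e2]
      · rw [if_neg e2, mul_zero]
    · rw [if_neg e1, zero_mul]

lemma sos_eq_zero {L n : ℕ} {p : Fin L → MvPolynomial (Fin n) ℝ}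
    (h : ∑ l, p l * p l = 0) (l : Fin L) : p l = 0 := by
  have hev : ∀ x : Fin n → ℝ, MvPolynomial.eval x (p l) = 0 := by
    intro x
    have h0 : ∑ l', (MvPolynomial.eval x (p l'))^2 = 0 := by
      have := congrArg (MvPolynomial.eval x) h
      simpa [sq] using this
    have := (Finset.sum_eq_zero_iff_of_nonneg (fun l' _ => sq_nonneg _)).mp h0 l
      (Finset.mem_univ l)
    exact pow_eq_zero_iff two_ne_zero |>.mp this
  exact MvPolynomial.funext fun x => by rw [hev x, map_zero]

lemma sos_totalDegree_le {L n e : ℕ} (p : Fin L → MvPolynomial (Fin n) ℝ)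
    (h : (∑ l, p l * p l).totalDegree ≤ 2 * e) (l₀ : Fin L) :
    (p l₀).totalDegree ≤ e := by
  by_contra hlt
  push_neg at hlt
  set D := Finset.univ.sup fun l => (p l).totalDegree with hD
  have hDl : ∀ l, (p l).totalDegree ≤ D := fun l => Finset.le_sup (f := fun l => (p l).totalDegree) (Finset.mem_univ l)
  have hDe : e < D := lt_of_lt_of_le hlt (hDl l₀)
  obtain ⟨l₁, _, hl₁⟩ := Finset.exists_mem_eq_sup Finset.univ
    ⟨l₀, Finset.mem_univ l₀⟩ fun l => (p l).totalDegree
  have hzero : homogeneousComponent (D + D) (∑ l, p l * p l) = 0 :=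
    homogeneousComponent_eq_zero _ _ (by omega)
  rw [map_sum] at hzero
  have heq : ∀ l, homogeneousComponent (D + D) (p l * p l) =
      homogeneousComponent D (p l) * homogeneousComponent D (p l) :=
    fun l => hc_sq (p l) (hDl l)
  rw [Finset.sum_congr rfl fun l _ => heq l] at hzero
  have hl1z := sos_eq_zero hzero l₁
  have hpne : p l₁ ≠ 0 := by
    intro h0
    rw [hD, hl₁, h0, MvPolynomial.totalDegree_zero] at hDe; omega
  obtain ⟨α, hαs, hαd⟩ : ∃ α ∈ (p l₁).support, α.degree = D := by
    obtain ⟨α, hα, hval⟩ := Finset.exists_mem_eq_sup (p l₁).support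
      (MvPolynomial.support_nonempty.mpr hpne) fun β => β.sum fun _ e => e
    refine ⟨α, hα, ?_⟩
    rw [← mdeg_eq_degree, mdeg_eq_sum, ← hval, hD, hl₁, MvPolynomial.totalDegree]
  have : coeff α (homogeneousComponent D (p l₁)) ≠ 0 := by
    rw [coeff_homogeneousComponent, if_pos hαd]
    exact MvPolynomial.mem_support_iff.mp hαs
  rw [hl1z] at this
  simp at this
def subL {n : ℕ} (xs : Fin n → ℝ) (i : Fin n) : Polynomial (MvPolynomial (Fin n) ℝ) :=
  Polynomial.C (X i - MvPolynomial.C (xs i)) * Polynomial.X + Polynomial.C (MvPolynomial.C (xs i))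

lemma subst_eval_one {n : ℕ} (xs : Fin n → ℝ) (p : MvPolynomial (Fin n) ℝ) :
    (MvPolynomial.aeval (subL xs) p).eval 1 = p := by
  induction p using MvPolynomial.induction_on with
  | C a => simp [MvPolynomial.algebraMap_eq]
  | add p q hp hq => simp [map_add, hp, hq]
  | mul_X p i hp => simp [map_mul, hp, subL]

lemma subst_eval_zero {n : ℕ} (xs : Fin n → ℝ) (p : MvPolynomial (Fin n) ℝ) :
    (MvPolynomial.aeval (subL xs) p).eval 0 = C (MvPolynomial.eval xs p) := by
  induction p using MvPolynomial.induction_on with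
  | C a => simp [MvPolynomial.algebraMap_eq]
  | add p q hp hq => simp [map_add, hp, hq]
  | mul_X p i hp => simp [map_mul, hp, subL, map_mul]

lemma subst_derivative {n : ℕ} (xs : Fin n → ℝ) (p : MvPolynomial (Fin n) ℝ) :
    Polynomial.derivative (MvPolynomial.aeval (subL xs) p) =
      ∑ i, Polynomial.C (X i - C (xs i)) *
        (MvPolynomial.aeval (subL xs) (pderiv i p) : Polynomial (MvPolynomial (Fin n) ℝ)) := by
  induction p using MvPolynomial.induction_on with
  | C a => simp [MvPolynomial.algebraMap_eq]
  | add p q hp hq =>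
      simp only [map_add, hp, hq, mul_add, ← Finset.sum_add_distrib]
  | mul_X p j hp =>
      rw [map_mul, Polynomial.derivative_mul, hp]
      have hder : Polynomial.derivative (MvPolynomial.aeval (subL xs) (X j : MvPolynomial (Fin n) ℝ)) =
          Polynomial.C (X j - C (xs j)) := by
        simp [subL]
      rw [hder]
      have hs : ∀ i : Fin n, Polynomial.C (X i - C (xs i)) *
          MvPolynomial.aeval (subL xs) (pderiv i (p * X j)) =
          Polynomial.C (X i - C (xs i)) * MvPolynomial.aeval (subL xs) (pderiv i p) *
            MvPolynomial.aeval (subL xs) (X j : MvPolynomial (Fin n) ℝ) +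
          (if i = j then MvPolynomial.aeval (subL xs) p * Polynomial.C (X j - C (xs j))
            else 0) := by
        intro i
        rw [pderiv_mul, map_add, map_mul, map_mul, mul_add]
        congr 1
        · ring
        · rcases eq_or_ne i j with rfl | hne
          · rw [if_pos rfl, pderiv_X_self, map_one, mul_one]; ring
          · rw [if_neg hne, pderiv_X_of_ne hne.symm, map_zero, mul_zero, mul_zero]
      rw [Finset.sum_congr rfl fun i _ => hs i, Finset.sum_add_distrib,
        Finset.sum_ite_eq' Finset.univ j, if_pos (Finset.mem_univ j), ← Finset.sum_mul]

/-- all coefficients of a polynomial over MvPolynomial have total degree at most `m` -/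
def CoeffDegLE {n : ℕ} (W : Polynomial (MvPolynomial (Fin n) ℝ)) (m : ℕ) : Prop :=
  ∀ j, (W.coeff j).totalDegree ≤ m

lemma CoeffDegLE.mul {n : ℕ} {W V : Polynomial (MvPolynomial (Fin n) ℝ)} {a b : ℕ}
    (hW : CoeffDegLE W a) (hV : CoeffDegLE V b) : CoeffDegLE (W * V) (a + b) := by
  intro j
  rw [Polynomial.coeff_mul]
  refine le_trans (MvPolynomial.totalDegree_finset_sum _ _) (Finset.sup_le fun x hx => ?_)
  exact le_trans (MvPolynomial.totalDegree_mul _ _) (add_le_add (hW x.1) (hV x.2))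

lemma CoeffDegLE.add {n : ℕ} {W V : Polynomial (MvPolynomial (Fin n) ℝ)} {a : ℕ}
    (hW : CoeffDegLE W a) (hV : CoeffDegLE V a) : CoeffDegLE (W + V) a := by
  intro j
  rw [Polynomial.coeff_add]
  exact le_trans (MvPolynomial.totalDegree_add _ _) (max_le (hW j) (hV j))

lemma coeffDegLE_subL {n : ℕ} (xs : Fin n → ℝ) (i : Fin n) : CoeffDegLE (subL xs i) 1 := by
  intro j
  rw [subL]
  rcases j with _ | _ | j <;>
    simp [Polynomial.coeff_add, Polynomial.coeff_C_mul, Polynomial.coeff_X, Polynomial.coeff_C]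
  · exact le_trans (MvPolynomial.totalDegree_sub_C_le _ _) (by simp [MvPolynomial.totalDegree_X])

lemma coeffDegLE_pow {n : ℕ} {W : Polynomial (MvPolynomial (Fin n) ℝ)} {a : ℕ}
    (hW : CoeffDegLE W a) (e : ℕ) : CoeffDegLE (W ^ e) (a * e) := by
  induction e with
  | zero =>
      intro j
      rcases j with _ | j <;> simp [Polynomial.coeff_one]
  | succ e ih =>
      rw [pow_succ, Nat.mul_succ]
      exact ih.mul hW

lemma coeffDegLE_subst {n : ℕ} (xs : Fin n → ℝ) (p : MvPolynomial (Fin n) ℝ) :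
    CoeffDegLE (MvPolynomial.aeval (subL xs) p) p.totalDegree := by
  intro j
  conv_lhs => rw [p.as_sum, map_sum]
  rw [Polynomial.finset_sum_coeff]
  refine le_trans (MvPolynomial.totalDegree_finset_sum _ _) (Finset.sup_le fun α hα => ?_)
  have hmono : CoeffDegLE (MvPolynomial.aeval (subL xs) (monomial α (coeff α p))) (mdeg α) := by
    rw [MvPolynomial.aeval_monomial]
    have hprod : CoeffDegLE (∏ i ∈ α.support, subL xs i ^ α i)
        (∑ i ∈ α.support, 1 * α i) := by
      classical
      induction α.support using Finset.induction with
      | empty =>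
          intro j; rcases j with _ | j <;> simp [Polynomial.coeff_one]
      | @insert i s hi ih =>
          rw [Finset.prod_insert hi, Finset.sum_insert hi]
          exact (coeffDegLE_pow (coeffDegLE_subL xs i) (α i)).mul ih
    have hC : CoeffDegLE (algebraMap ℝ (Polynomial (MvPolynomial (Fin n) ℝ)) (coeff α p)) 0 := by
      intro j
      rcases j with _ | j <;>
        simp [MvPolynomial.algebraMap_eq, Polynomial.coeff_C]
    have := hC.mul hprod
    rw [zero_add] at this
    refine fun j => le_trans (this j) ?_
    simp only [one_mul]
    rw [mdeg_eq_sum]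
    rfl
  exact le_trans (hmono j) (le_trans (mdeg_le_totalDegree hα) (le_refl _))
lemma ev_totalDegree_le {n k : ℕ} (W : Polynomial (MvPolynomial (Fin n) ℝ))
    (hW : ∀ j, (W.coeff j).totalDegree ≤ k) (s : ℝ) :
    (Polynomial.eval (C s) W).totalDegree ≤ k := by
  rw [Polynomial.eval_eq_sum_range]
  refine le_trans (MvPolynomial.totalDegree_finset_sum _ _) (Finset.sup_le fun m _ => ?_)
  refine le_trans (MvPolynomial.totalDegree_mul _ _) ?_
  rw [← map_pow, MvPolynomial.totalDegree_C, add_zero]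
  exact hW m

lemma key_nonneg {n k : ℕ} {y : (Fin n →₀ ℕ) → ℝ}
    (hmom : IsPSD (locMat k (1 : MvPolynomial (Fin n) ℝ) y))
    (W : Polynomial (MvPolynomial (Fin n) ℝ)) (hW : ∀ j, (W.coeff j).totalDegree ≤ k)
    (M : ℕ) (hM : (W*W).natDegree < M) :
    0 ≤ ∑ m ∈ Finset.range M, (((m+1)*(m+2) : ℝ))⁻¹ * Riesz y ((W*W).coeff m) := by
  set c : ℕ → ℝ := fun m => Riesz y ((W*W).coeff m) with hc
  have key : ∀ s : ℝ, ∑ m ∈ Finset.range M, s^m * c m =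
      Riesz y (Polynomial.eval (C s) W * Polynomial.eval (C s) W) := by
    intro s
    rw [← Polynomial.eval_mul, Polynomial.eval_eq_sum_range' hM, Riesz_sum]
    refine Finset.sum_congr rfl fun m _ => ?_
    have : (W*W).coeff m * (C s) ^ m = (s ^ m) • ((W*W).coeff m) := by
      rw [MvPolynomial.smul_eq_C_mul, ← map_pow]
      ring
    rw [this, Riesz_smul]
  have hF : ∀ s : ℝ, 0 ≤ s → s ≤ 1 →
      0 ≤ (1 - s) * ∑ m ∈ Finset.range M, s^m * c m := by
    intro s h0 h1
    refine mul_nonneg (by linarith) ?_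
    rw [key s]
    exact riesz_sq_nonneg hmom _ (ev_totalDegree_le W hW s)
  have hint : ∀ m : ℕ, (∫ s in (0:ℝ)..1, (1-s) * (s^m * c m)) =
      (((m+1)*(m+2) : ℝ))⁻¹ * c m := by
    intro m
    have : ∀ s : ℝ, (1-s) * (s^m * c m) = c m * s^m - c m * s^(m+1) := by
      intro s; ring
    rw [intervalIntegral.integral_congr fun s _ => this s]
    rw [intervalIntegral.integral_sub
      (Continuous.intervalIntegrable (u := fun x : ℝ => c m * x ^ m)
        (continuous_const.mul (continuous_pow _)) _ _)
      (Continuous.intervalIntegrable (u := fun x : ℝ => c m * x ^ (m + 1))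
        (continuous_const.mul (continuous_pow _)) _ _),
      intervalIntegral.integral_const_mul, intervalIntegral.integral_const_mul,
      integral_pow, integral_pow]
    have h1 : ((m+1:ℕ) : ℝ) + 1 ≠ 0 := by positivity
    have h2 : ((m:ℕ) : ℝ) + 1 ≠ 0 := by positivity
    push_cast
    field_simp
    ring
  have hTot : (∫ s in (0:ℝ)..1, (1-s) * ∑ m ∈ Finset.range M, s^m * c m) =
      ∑ m ∈ Finset.range M, (((m+1)*(m+2) : ℝ))⁻¹ * c m := by
    have expand : ∀ s : ℝ, (1 - s) * ∑ m ∈ Finset.range M, s^m * c m =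
        ∑ m ∈ Finset.range M, (1-s) * (s^m * c m) := fun s => Finset.mul_sum _ _ _
    rw [intervalIntegral.integral_congr fun s _ => expand s]
    have step : (∫ x in (0:ℝ)..1, ∑ m ∈ Finset.range M, (1-x)*(x^m*c m)) =
        ∑ m ∈ Finset.range M, ∫ x in (0:ℝ)..1, (1-x)*(x^m*c m) :=
      intervalIntegral.integral_finset_sum fun m _ =>
        Continuous.intervalIntegrable (by fun_prop) _ _
    rw [step]
    exact Finset.sum_congr rfl fun m _ => hint m
  rw [← hTot]
  exact intervalIntegral.integral_nonneg (by norm_num) fun s hs => hF s hs.1 hs.2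
lemma mdeg_sub_single {n : ℕ} {α : Fin n →₀ ℕ} {i : Fin n} (h : α i ≠ 0) :
    mdeg (α - Finsupp.single i 1) = mdeg α - 1 := by
  rw [mdeg, mdeg, ← Finset.sum_erase_add _ _ (Finset.mem_univ i),
    ← Finset.sum_erase_add _ _ (Finset.mem_univ i)]
  have he : ∑ j ∈ Finset.univ.erase i, (α - Finsupp.single i 1 : Fin n →₀ ℕ) j =
      ∑ j ∈ Finset.univ.erase i, α j := by
    refine Finset.sum_congr rfl fun j hj => ?_
    rw [Finsupp.tsub_apply, Finsupp.single_apply,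
      if_neg (Finset.ne_of_mem_erase hj).symm, Nat.sub_zero]
  rw [he, Finsupp.tsub_apply, Finsupp.single_apply, if_pos rfl]
  omega

lemma totalDegree_pderiv_le {n : ℕ} (i : Fin n) (p : MvPolynomial (Fin n) ℝ) :
    (pderiv i p).totalDegree ≤ p.totalDegree - 1 := by
  conv_lhs => rw [p.as_sum, map_sum]
  refine le_trans (MvPolynomial.totalDegree_finset_sum _ _) (Finset.sup_le fun α hα => ?_)
  rw [pderiv_monomial]
  rcases Nat.eq_zero_or_pos (α i) with h0 | hpos
  · rw [h0, Nat.cast_zero, mul_zero, monomial_zero, MvPolynomial.totalDegree_zero]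
    exact Nat.zero_le _
  · refine le_trans (MvPolynomial.totalDegree_monomial_le _ _) ?_
    show ((α - Finsupp.single i 1).sum fun _ e => e) ≤ _
    rw [← mdeg_eq_sum, mdeg_sub_single (by omega)]
    exact Nat.sub_le_sub_right (mdeg_le_totalDegree hα) 1

lemma CoeffDegLE.mono {n : ℕ} {W : Polynomial (MvPolynomial (Fin n) ℝ)} {a b : ℕ}
    (hab : a ≤ b) (hW : CoeffDegLE W a) : CoeffDegLE W b := fun j => le_trans (hW j) hab

lemma CoeffDegLE.sum {n : ℕ} {ι : Type*} {s : Finset ι}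
    {W : ι → Polynomial (MvPolynomial (Fin n) ℝ)} {a : ℕ}
    (hW : ∀ i ∈ s, CoeffDegLE (W i) a) : CoeffDegLE (∑ i ∈ s, W i) a := by
  classical
  induction s using Finset.induction with
  | empty => intro j; simp
  | @insert i s hi ih =>
      rw [Finset.sum_insert hi]
      exact (hW i (Finset.mem_insert_self i s)).add
        (ih fun j hj => hW j (Finset.mem_insert_of_mem hj))

lemma coeffDegLE_C {n : ℕ} (v : MvPolynomial (Fin n) ℝ) {a : ℕ} (hv : v.totalDegree ≤ a) :
    CoeffDegLE (Polynomial.C v) a := by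
  intro j
  rcases j with _ | j <;> simp [Polynomial.coeff_C, hv]

end


noncomputable section
lemma Riesz_sub {n : ℕ} (y : (Fin n →₀ ℕ) → ℝ) (p q : MvPolynomial (Fin n) ℝ) :
    Riesz y (p - q) = Riesz y p - Riesz y q := by
  rw [sub_eq_add_neg, Riesz_add, Riesz_neg, ← sub_eq_add_neg]

lemma pderiv_eq_zero_of_totalDegree_eq_zero {n : ℕ} {g : MvPolynomial (Fin n) ℝ}
    (h : g.totalDegree = 0) (i : Fin n) : pderiv i g = 0 := by
  conv_lhs => rw [g.as_sum, map_sum]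
  refine Finset.sum_eq_zero fun α hα => ?_
  rw [pderiv_monomial, (totalDegree_eq_zero_iff _ g).mp h α hα i, Nat.cast_zero, mul_zero,
    monomial_zero]

lemma jensen {n k : ℕ} {y : (Fin n →₀ ℕ) → ℝ} (hy0 : y 0 = 1)
    (hmom : IsPSD (locMat k (1 : MvPolynomial (Fin n) ℝ) y))
    (g : MvPolynomial (Fin n) ℝ) (hg : SosConvex g) (hdeg : g.totalDegree ≤ 2*k) :
    MvPolynomial.eval (fun i => y (Finsupp.single i 1)) g ≤ Riesz y g := by
  obtain ⟨L, P, hP⟩ := hg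
  set xs : Fin n → ℝ := fun i => y (Finsupp.single i 1) with hxs
  have hdd : ∀ i j : Fin n, (pderiv i (pderiv j g)).totalDegree ≤ 2 * (k-1) := by
    intro i j
    have h1 := totalDegree_pderiv_le j g
    have h2 := totalDegree_pderiv_le i (pderiv j g)
    omega
  have hPdeg : ∀ l (i : Fin n), (P l i).totalDegree ≤ k - 1 := fun l i =>
    sos_totalDegree_le (fun l => P l i) (by rw [← hP i i]; exact hdd i i) l
  set G : Polynomial (MvPolynomial (Fin n) ℝ) := MvPolynomial.aeval (subL xs) g with hG
  set Q : Fin L → Polynomial (MvPolynomial (Fin n) ℝ) := fun l =>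
    ∑ i, Polynomial.C (X i - C (xs i)) * MvPolynomial.aeval (subL xs) (P l i) with hQ
  -- coefficient degree bound for Q
  have hQdeg : ∀ l, CoeffDegLE (Q l) k := by
    intro l
    rcases Nat.eq_zero_or_pos k with hk0 | hk1
    · have hz : ∀ i : Fin n, P l i = 0 := by
        intro i
        refine sos_eq_zero (p := fun l => P l i) ?_ l
        have hgz : pderiv i g = 0 :=
          pderiv_eq_zero_of_totalDegree_eq_zero (show g.totalDegree = 0 by omega) i
        rw [← hP i i, hgz, map_zero]
      have : Q l = 0 := by
        rw [hQ]
        refine Finset.sum_eq_zero fun i _ => ?_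
        rw [hz i, map_zero, mul_zero]
      rw [this]
      intro j; simp
    · refine CoeffDegLE.sum fun i _ => ?_
      have h1 : CoeffDegLE (Polynomial.C (X i - C (xs i))) 1 :=
        coeffDegLE_C _ (le_trans (MvPolynomial.totalDegree_sub_C_le _ _)
          (by simp [MvPolynomial.totalDegree_X]))
      have h2 : CoeffDegLE (MvPolynomial.aeval (subL xs) (P l i)) (k-1) :=
        (coeffDegLE_subst xs (P l i)).mono (hPdeg l i)
      exact (h1.mul h2).mono (by omega)
  -- second derivative identity
  have hG2 : Polynomial.derivative (Polynomial.derivative G) = ∑ l, Q l * Q l := by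
    rw [hG, subst_derivative, Polynomial.derivative_sum]
    have step1 : ∀ i : Fin n, Polynomial.derivative (Polynomial.C (X i - C (xs i)) *
        MvPolynomial.aeval (subL xs) (pderiv i g)) =
        ∑ j, ∑ l, Polynomial.C (X i - C (xs i)) * MvPolynomial.aeval (subL xs) (P l i) *
          (Polynomial.C (X j - C (xs j)) * MvPolynomial.aeval (subL xs) (P l j)) := by
      intro i
      rw [Polynomial.derivative_C_mul, subst_derivative, Finset.mul_sum]
      refine Finset.sum_congr rfl fun j _ => ?_
      rw [hP j i, map_sum, Finset.mul_sum, Finset.mul_sum]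
      refine Finset.sum_congr rfl fun l _ => ?_
      rw [map_mul]
      ring
    rw [Finset.sum_congr rfl fun i _ => step1 i]
    rw [Finset.sum_congr rfl fun i (_ : i ∈ Finset.univ) => Finset.sum_comm (s := Finset.univ)
      (t := Finset.univ) (f := fun j l => Polynomial.C (X i - C (xs i)) *
        MvPolynomial.aeval (subL xs) (P l i) *
        (Polynomial.C (X j - C (xs j)) * MvPolynomial.aeval (subL xs) (P l j)))]
    rw [Finset.sum_comm]
    refine Finset.sum_congr rfl fun l _ => ?_
    rw [hQ, Finset.sum_mul_sum]
  set bseq : ℕ → ℝ := fun j => Riesz y (G.coeff j) with hbseq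
  set N : ℕ := G.natDegree with hN
  -- hb0
  have hb0 : bseq 0 = MvPolynomial.eval xs g := by
    rw [hbseq]
    show Riesz y (G.coeff 0) = _
    rw [Polynomial.coeff_zero_eq_eval_zero, hG, subst_eval_zero, Riesz_C, hy0, mul_one]
  -- hb1
  have hb1 : bseq 1 = 0 := by
    have hcast : Riesz y ((Polynomial.derivative G).coeff 0) = bseq 1 := by
      rw [Polynomial.coeff_derivative]
      norm_num
      rfl
    rw [← hcast, hG, subst_derivative, Polynomial.finset_sum_coeff]
    rw [Riesz_sum]
    refine Finset.sum_eq_zero fun i _ => ?_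
    rw [Polynomial.coeff_C_mul, Polynomial.coeff_zero_eq_eval_zero, subst_eval_zero]
    set c : ℝ := MvPolynomial.eval xs (pderiv i g) with hcdef
    have expand : (X i - C (xs i)) * C c = c • (X i : MvPolynomial (Fin n) ℝ)
        - C (c * xs i) := by
      rw [MvPolynomial.smul_eq_C_mul, map_mul]
      ring
    rw [expand, Riesz_sub, Riesz_smul, Riesz_X, Riesz_C, hy0, mul_one]
    show c * xs i - c * xs i = 0
    ring
  -- hb2
  have hcastmul : ∀ (c : ℝ) (p : MvPolynomial (Fin n) ℝ),
      Riesz y (p * C c) = c * Riesz y p := by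
    intro c p
    rw [mul_comm, ← MvPolynomial.smul_eq_C_mul, Riesz_smul]
  have hb2 : ∀ m : ℕ, Riesz y ((∑ l, Q l * Q l).coeff m) =
      (((m:ℝ)+1) * ((m:ℝ)+2)) * bseq (m+2) := by
    intro m
    rw [← hG2, Polynomial.coeff_derivative, Polynomial.coeff_derivative]
    have e1 : ((m : MvPolynomial (Fin n) ℝ) + 1) = C ((m:ℝ)+1) := by
      rw [map_add, MvPolynomial.C_eq_coe_nat, MvPolynomial.C_1]
    have e2 : (((m+1 : ℕ) : MvPolynomial (Fin n) ℝ) + 1) = C ((m:ℝ)+2) := by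
      rw [show ((m:ℝ)+2) = ((m+1:ℕ):ℝ) + 1 by push_cast; ring, map_add,
        MvPolynomial.C_eq_coe_nat, MvPolynomial.C_1]
    rw [e1, e2, hcastmul, hcastmul]
    show ((m:ℝ)+1) * (((m:ℝ)+2) * Riesz y (G.coeff (m+1+1))) = _
    ring
  have hb2' : ∀ m : ℕ, bseq (m+2) =
      (((m+1)*(m+2) : ℝ))⁻¹ * Riesz y ((∑ l, Q l * Q l).coeff m) := by
    intro m
    rw [hb2 m]
    rw [inv_mul_cancel_left₀ (by positivity)]
  -- sum decomposition
  have hsum_g : Riesz y g = ∑ j ∈ Finset.range (N+3), bseq j := by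
    have hgeq : g = ∑ j ∈ Finset.range (N+3), G.coeff j := by
      conv_lhs => rw [← subst_eval_one xs g]
      rw [show (MvPolynomial.aeval (subL xs)) g = G from rfl,
        Polynomial.eval_eq_sum_range' (n := N+3) (by omega) 1]
      exact Finset.sum_congr rfl fun j _ => by rw [one_pow, mul_one]
    conv_lhs => rw [hgeq]
    rw [Riesz_sum]
  have hsplit : ∑ j ∈ Finset.range (N+3), bseq j =
      bseq 0 + bseq 1 + ∑ m ∈ Finset.range (N+1), bseq (m+2) := by
    rw [Finset.sum_range_succ' bseq (N+2), Finset.sum_range_succ' (fun i => bseq (i+1)) (N+1)]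
    ring
  -- the nonnegative part
  set M : ℕ := max (N+1) ((Finset.univ.sup fun l => (Q l * Q l).natDegree) + 1) with hM
  have hext : ∑ m ∈ Finset.range (N+1), bseq (m+2) = ∑ m ∈ Finset.range M, bseq (m+2) := by
    refine Finset.sum_subset (Finset.range_subset_range.mpr (le_max_left _ _)) fun m _ hm => ?_
    rw [Finset.mem_range, not_lt] at hm
    have : G.natDegree < m + 2 := by omega
    rw [hbseq]
    show Riesz y (G.coeff (m+2)) = 0
    rw [Polynomial.coeff_eq_zero_of_natDegree_lt this, Riesz_zero]
  have hswap : ∑ m ∈ Finset.range M, bseq (m+2) =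
      ∑ l, ∑ m ∈ Finset.range M, (((m+1)*(m+2) : ℝ))⁻¹ * Riesz y ((Q l * Q l).coeff m) := by
    rw [Finset.sum_congr rfl fun m _ => hb2' m]
    rw [Finset.sum_congr rfl fun m (_ : m ∈ Finset.range M) => by
      rw [Polynomial.finset_sum_coeff, Riesz_sum, Finset.mul_sum]]
    exact Finset.sum_comm
  have hnonneg : 0 ≤ ∑ m ∈ Finset.range (N+1), bseq (m+2) := by
    rw [hext, hswap]
    refine Finset.sum_nonneg fun l _ => ?_
    refine key_nonneg hmom (Q l) (hQdeg l) M ?_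
    exact lt_of_lt_of_le (Nat.lt_succ_of_le (Finset.le_sup (f := fun l => (Q l * Q l).natDegree)
      (Finset.mem_univ l))) (le_max_right _ _)
  rw [hsum_g, hsplit, hb0, hb1, add_zero]
  linarith

end

noncomputable section
lemma main_ineq {n k : ℕ} {y : (Fin n →₀ ℕ) → ℝ} (hy0 : y 0 = 1)
    (hmom : IsPSD (locMat k (1 : MvPolynomial (Fin n) ℝ) y))
    {p : MvPolynomial (Fin n) ℝ} (hconc : SosConcave p) (hdeg : halfCeil p.totalDegree ≤ k)
    (hloc : IsPSD (locMat k p y)) (x : Fin n → ℝ) (hx : ∀ i, x i = y (Finsupp.single i 1)) :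
    0 ≤ MvPolynomial.eval x p := by
  have hxeq : x = fun i => y (Finsupp.single i 1) := funext hx
  have hdeg' : (-p).totalDegree ≤ 2 * k := by
    rw [MvPolynomial.totalDegree_neg]
    exact halfCeil_le_iff.mp hdeg
  have hj := jensen hy0 hmom (-p) hconc hdeg'
  rw [Riesz_neg, map_neg, ← hxeq] at hj
  have h0 := riesz_nonneg_of_isPSD hloc
  linarith


end

/-- **Theorem 2.5.** If all the polynomials `f_i` and `h_j` are sos-concave,
then the semidefinite relaxation set `S_k` equals `C ∩ H` for every `k ≥ d`.
No nonempty-interior assumption on `C` or `H` is needed. -/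
theorem relaxation_exact_of_sos_concave {n m r t : ℕ}
    (f : Fin r → MvPolynomial (Fin n) ℝ) (g : Fin t → MvPolynomial (Fin m) ℝ)
    (A : Matrix (Fin m) (Fin n) ℝ)
    (h : Fin t → MvPolynomial (Fin n) ℝ)
    (hh : ∀ j, h j = MvPolynomial.aeval
      (fun i : Fin m => ∑ l : Fin n, MvPolynomial.C (A i l) * MvPolynomial.X l) (g j))
    (hfconc : ∀ i, SosConcave (f i)) (hhconc : ∀ j, SosConcave (h j))
    (C H : Set (Fin n → ℝ))
    (hC : C = {x | ∀ i, 0 ≤ MvPolynomial.eval x (f i)})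
    (hH : H = {x | ∀ j, 0 ≤ MvPolynomial.eval x (h j)})
    (d : ℕ)
    (hd : d = max (Finset.univ.sup fun i => halfCeil (f i).totalDegree)
                  (Finset.univ.sup fun j => halfCeil (h j).totalDegree))
    (S : ℕ → Set (Fin n → ℝ))
    (hS : ∀ k, S k = {x | ∃ y : (Fin n →₀ ℕ) → ℝ, y 0 = 1 ∧
        (∀ i : Fin n, x i = y (Finsupp.single i 1)) ∧
        IsPSD (locMat k (1 : MvPolynomial (Fin n) ℝ) y) ∧
        (∀ i, IsPSD (locMat k (f i) y)) ∧
        (∀ j, IsPSD (locMat k (h j) y))}) :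
    ∀ k, d ≤ k → S k = C ∩ H := by

  intro k hk
  rw [hS k, hC, hH]
  ext x
  simp only [Set.mem_setOf_eq, Set.mem_inter_iff]
  constructor
  · rintro ⟨y, hy0, hxy, hmom, hfP, hhP⟩
    constructor
    · intro i
      refine main_ineq hy0 hmom (hfconc i) ?_ (hfP i) x hxy
      refine le_trans (le_trans ?_ (le_max_left _ _)) (hd ▸ hk)
      exact Finset.le_sup (f := fun i => halfCeil (f i).totalDegree) (Finset.mem_univ i)
    · intro j
      refine main_ineq hy0 hmom (hhconc j) ?_ (hhP j) x hxy
      refine le_trans (le_trans ?_ (le_max_right _ _)) (hd ▸ hk)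
      exact Finset.le_sup (f := fun j => halfCeil (h j).totalDegree) (Finset.mem_univ j)
  · rintro ⟨hxC, hxH⟩
    refine ⟨monoEval x, monoEval_zero x, fun i => (monoEval_single x i).symm, ?_, ?_, ?_⟩
    · exact isPSD_locMat_monoEval x 1 (by rw [map_one]; norm_num)
    · exact fun i => isPSD_locMat_monoEval x (f i) (hxC i)
    · exact fun j => isPSD_locMat_monoEval x (h j) (hxH j)
end
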